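/- For any positive integers n and m, every unit of the multivariate polynomial ring MvPolynomial (Fin m) (ZMod n) is an involution if and only if n divides 12. -/

import Mathlib

/-- All units square to 1, twice a nilpotent is 0, product of nilpotents is 0. -/
def GoodRing (R : Type*) [CommRing R] : Prop :=
  (∀ a : R, IsUnit a → a ^ 2 = 1) ∧
  (∀ a : R, IsNilpotent a → 2 * a = 0) ∧
  (∀ a b : R, IsNilpotent a → IsNilpotent b → a * b = 0)

lemma goodRing_polynomial {R : Type*} [CommRing R] (h : GoodRing R) :
    GoodRing (Polynomial R) := by
  obtain ⟨hu, h2, hp⟩ := h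
  have key : ∀ P Q : Polynomial R, (∀ i, IsNilpotent (P.coeff i)) →
      (∀ i, IsNilpotent (Q.coeff i)) → P * Q = 0 := by
    intro P Q hP hQ
    ext k
    rw [Polynomial.coeff_mul, Polynomial.coeff_zero]
    exact Finset.sum_eq_zero fun x _ => hp _ _ (hP x.1) (hQ x.2)
  have key2 : ∀ P : Polynomial R, (∀ i, IsNilpotent (P.coeff i)) → 2 * P = 0 := by
    intro P hP
    ext k
    rw [two_mul, Polynomial.coeff_add, ← two_mul, Polynomial.coeff_zero]
    exact h2 _ (hP k)
  refine ⟨?_, ?_, ?_⟩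
  · intro P hPu
    rw [Polynomial.isUnit_iff_coeff_isUnit_isNilpotent] at hPu
    obtain ⟨h0, hnil⟩ := hPu
    set g := P - Polynomial.C (P.coeff 0) with hg
    have hgcoeff : ∀ i, IsNilpotent (g.coeff i) := by
      intro i
      rcases eq_or_ne i 0 with rfl | hi
      · simp [hg]
      · simpa [hg, Polynomial.coeff_C, hi] using hnil i hi
    have h2g : 2 * g = 0 := key2 g hgcoeff
    have hgg : g * g = 0 := key g g hgcoeff hgcoeff
    have hP' : P = Polynomial.C (P.coeff 0) + g := by rw [hg]; ring
    have : P ^ 2 = Polynomial.C (P.coeff 0) ^ 2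
        + Polynomial.C (P.coeff 0) * (2 * g) + g * g := by (conv_lhs => rw [hP']); ring
    rw [this, h2g, hgg, mul_zero, add_zero, add_zero, ← map_pow, hu _ h0, map_one]
  · intro P hP
    rw [Polynomial.isNilpotent_iff] at hP
    exact key2 P hP
  · intro P Q hP hQ
    rw [Polynomial.isNilpotent_iff] at hP
    rw [Polynomial.isNilpotent_iff] at hQ
    exact key P Q hP hQ

lemma goodRing_of_equiv {R S : Type*} [CommRing R] [CommRing S] (e : R ≃+* S)
    (h : GoodRing R) : GoodRing S := by
  obtain ⟨hu, h2, hp⟩ := h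
  refine ⟨fun a ha => ?_, fun a ha => ?_, fun a b ha hb => ?_⟩
  · have h1 := hu (e.symm a) (ha.map e.symm.toRingHom)
    apply e.symm.injective
    rw [map_pow, map_one, h1]
  · have h1 := h2 (e.symm a) (ha.map e.symm.toRingHom)
    apply e.symm.injective
    rw [map_mul, map_zero, map_ofNat, ← h1]
  · have h1 := hp (e.symm a) (e.symm b) (ha.map e.symm.toRingHom) (hb.map e.symm.toRingHom)
    apply e.symm.injective
    rw [map_mul, map_zero, h1]

lemma goodRing_mvPolynomial {R : Type*} [CommRing R] (h : GoodRing R) (m : ℕ) :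
    GoodRing (MvPolynomial (Fin m) R) := by
  induction m with
  | zero => exact goodRing_of_equiv (MvPolynomial.isEmptyRingEquiv R (Fin 0)).symm h
  | succ k ih =>
      exact goodRing_of_equiv (MvPolynomial.finSuccEquiv R k).toRingEquiv.symm
        (goodRing_polynomial ih)


instance zmodDecidableIsUnit (k : ℕ) [NeZero k] : DecidablePred (IsUnit : ZMod k → Prop) :=
  fun a => decidable_of_iff (∃ b, a * b = 1) isUnit_iff_exists_inv.symm

lemma zmod_nil_dvd {n : ℕ} [NeZero n] (a : ZMod n) (ha : IsNilpotent a)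
    {p : ℕ} (hp : p.Prime) (hpn : p ∣ n) : p ∣ a.val := by
  haveI : Fact p.Prime := ⟨hp⟩
  have h1 : IsNilpotent ((ZMod.castHom hpn (ZMod p)) a) := ha.map _
  have h2 : (ZMod.castHom hpn (ZMod p)) a = 0 := h1.eq_zero
  rw [ZMod.castHom_apply, ← ZMod.natCast_val, ZMod.natCast_eq_zero_iff] at h2
  exact h2


lemma goodRing_zmod {n : ℕ} (hn : 0 < n) (hdvd : n ∣ 12) : GoodRing (ZMod n) := by
  haveI : NeZero n := ⟨hn.ne'⟩
  have hcast : ∀ a : ZMod n, ((a.val : ℕ) : ZMod n) = a := fun a => by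
    rw [ZMod.natCast_val, ZMod.cast_id]
  have hval : ∀ a : ZMod n, a.val < n := fun a => ZMod.val_lt a
  refine ⟨?_, ?_, ?_⟩
  · have h12 : n ≤ 12 := Nat.le_of_dvd (by norm_num) hdvd
    interval_cases n <;> first
      | decide
      | (exfalso; omega)
  · intro a ha
    have h2 : 2 ∣ n → 2 ∣ a.val := fun h => zmod_nil_dvd a ha Nat.prime_two h
    have h3 : 3 ∣ n → 3 ∣ a.val := fun h => zmod_nil_dvd a ha Nat.prime_three h
    have hv := hval a
    have : ((2 * a.val : ℕ) : ZMod n) = 0 := by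
      rw [ZMod.natCast_eq_zero_iff]
      have h12 : n ≤ 12 := Nat.le_of_dvd (by norm_num) hdvd
      interval_cases n <;> omega
    rw [Nat.cast_mul, hcast a, Nat.cast_ofNat] at this
    exact this
  · intro a b ha hb
    have h2a : 2 ∣ n → 2 ∣ a.val := fun h => zmod_nil_dvd a ha Nat.prime_two h
    have h3a : 3 ∣ n → 3 ∣ a.val := fun h => zmod_nil_dvd a ha Nat.prime_three h
    have h2b : 2 ∣ n → 2 ∣ b.val := fun h => zmod_nil_dvd b hb Nat.prime_two h
    have h3b : 3 ∣ n → 3 ∣ b.val := fun h => zmod_nil_dvd b hb Nat.prime_three h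
    have hva := hval a
    have hvb := hval b
    have : ((a.val * b.val : ℕ) : ZMod n) = 0 := by
      rw [ZMod.natCast_eq_zero_iff]
      have h12 : n ≤ 12 := Nat.le_of_dvd (by norm_num) hdvd
      interval_cases n
      · exact one_dvd _
      · have : a.val = 0 := by omega
        simp [this]
      · have : a.val = 0 := by omega
        simp [this]
      · obtain ⟨x, hx⟩ := h2a (by norm_num)
        obtain ⟨y, hy⟩ := h2b (by norm_num)
        exact ⟨x * y, by rw [hx, hy]; ring⟩
      · exfalso; omega
      · have : a.val = 0 := by omega
        simp [this]
      · exfalso; omega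
      · exfalso; omega
      · exfalso; omega
      · exfalso; omega
      · exfalso; omega
      · have h6a : 6 ∣ a.val := by omega
        have h6b : 6 ∣ b.val := by omega
        obtain ⟨x, hx⟩ := h6a
        obtain ⟨y, hy⟩ := h6b
        exact ⟨3 * x * y, by rw [hx, hy]; ring⟩
    rw [Nat.cast_mul, hcast a, hcast b] at this
    exact this


lemma units_desc {n : ℕ} [NeZero n] (hU : ∀ c : (ZMod n)ˣ, (c : ZMod n) ^ 2 = 1)
    {d : ℕ} [NeZero d] (hd : d ∣ n) (v : (ZMod d)ˣ) : (v : ZMod d) ^ 2 = 1 := by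
  obtain ⟨u, rfl⟩ := ZMod.unitsMap_surjective hd v
  have h1 := hU u
  have : ((ZMod.unitsMap hd u : ZMod d)) = ZMod.castHom hd (ZMod d) (u : ZMod n) := rfl
  rw [this, ← map_pow, h1, map_one]

lemma nt_step (n : ℕ) (hn : 0 < n)
    (hU : ∀ c : (ZMod n)ˣ, (c : ZMod n) ^ 2 = 1)
    (hNil : ∀ a : ZMod n, IsNilpotent a → 2 * a = 0 ∧ a * a = 0) :
    n ∣ 12 := by
  haveI : NeZero n := ⟨hn.ne'⟩
  -- primes dividing n are 2 or 3
  have hprime : ∀ p : ℕ, p.Prime → p ∣ n → p = 2 ∨ p = 3 := by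
    intro p hp hpn
    by_contra hcon
    push_neg at hcon
    have hp2 := hp.two_le
    have hp5 : 5 ≤ p := by
      rcases hcon with ⟨h2, h3⟩
      have : p ≠ 4 := by rintro rfl; norm_num at hp
      omega
    haveI : Fact p.Prime := ⟨hp⟩
    haveI : NeZero p := ⟨hp.pos.ne'⟩
    have h2u : IsUnit (2 : ZMod p) := by
      rw [isUnit_iff_ne_zero]
      intro h0
      rw [show ((2 : ZMod p)) = ((2 : ℕ) : ZMod p) by norm_num,
        ZMod.natCast_eq_zero_iff] at h0
      have := Nat.le_of_dvd (by norm_num) h0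
      omega
    have := units_desc hU hpn h2u.unit
    rw [IsUnit.unit_spec] at this
    have h30 : ((3 : ℕ) : ZMod p) = 0 := by push_cast; linear_combination this
    rw [ZMod.natCast_eq_zero_iff] at h30
    have := Nat.le_of_dvd (by norm_num) h30
    omega
  have h9 : ¬ (9 ∣ n) := by
    intro h9n
    have h2u : IsUnit (2 : ZMod 9) := by decide
    have := units_desc hU h9n h2u.unit
    rw [IsUnit.unit_spec] at this
    exact absurd this (by decide)
  have h16 : ¬ (16 ∣ n) := by
    intro h16n
    have h3u : IsUnit (3 : ZMod 16) := by decide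
    have := units_desc hU h16n h3u.unit
    rw [IsUnit.unit_spec] at this
    exact absurd this (by decide)
  have h24 : n ∣ 24 := by
    rw [← Nat.factorization_le_iff_dvd hn.ne' (by norm_num)]
    intro p
    by_cases hp : p.Prime
    · by_cases hpn : p ∣ n
      · rcases hprime p hp hpn with rfl | rfl
        · have hub : ¬ (4 ≤ n.factorization 2) := by
            intro hle
            exact h16 (by
              have := (Nat.Prime.pow_dvd_iff_le_factorization Nat.prime_two hn.ne').2 hle
              norm_num at this ⊢
              exact this)
          have hlb : 3 ≤ (24 : ℕ).factorization 2 :=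
            (Nat.Prime.pow_dvd_iff_le_factorization Nat.prime_two (by norm_num)).1 (by norm_num)
          omega
        · have hub : ¬ (2 ≤ n.factorization 3) := by
            intro hle
            exact h9 (by
              have := (Nat.Prime.pow_dvd_iff_le_factorization Nat.prime_three hn.ne').2 hle
              norm_num at this ⊢
              exact this)
          have hlb : 1 ≤ (24 : ℕ).factorization 3 :=
            (Nat.Prime.pow_dvd_iff_le_factorization Nat.prime_three (by norm_num)).1 (by norm_num)
          omega
      · rw [Nat.factorization_eq_zero_of_not_dvd hpn]
        exact Nat.zero_le _
    · simp [Nat.factorization_eq_zero_of_not_prime _ hp]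
  have hle : n ≤ 24 := Nat.le_of_dvd (by norm_num) h24
  interval_cases n <;>
    first
      | decide
      | (exact absurd h24 (by decide))
      | (exact absurd (hNil 2 ⟨3, by decide⟩).1 (by decide))
      | (exact absurd (hNil 6 ⟨3, by decide⟩).1 (by decide))

theorem stmt_14 (n m : ℕ) (hn : 0 < n) (hm : 0 < m) :
    (∀ u : (MvPolynomial (Fin m) (ZMod n))ˣ,
      (u : MvPolynomial (Fin m) (ZMod n)) ^ 2 = 1) ↔ n ∣ 12 := by
  constructor
  · intro h
    have hU : ∀ c : (ZMod n)ˣ, (c : ZMod n) ^ 2 = 1 := by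
      intro c
      have hC : IsUnit (MvPolynomial.C (c : ZMod n) : MvPolynomial (Fin m) (ZMod n)) :=
        c.isUnit.map MvPolynomial.C
      have h1 := h hC.unit
      rw [IsUnit.unit_spec, ← map_pow] at h1
      have h2 : (MvPolynomial.C ((c : ZMod n) ^ 2) : MvPolynomial (Fin m) (ZMod n))
          = MvPolynomial.C 1 := by rw [h1, map_one]
      exact MvPolynomial.C_injective _ _ h2
    have hNil : ∀ a : ZMod n, IsNilpotent a → 2 * a = 0 ∧ a * a = 0 := by
      intro a ha
      set i : Fin m := ⟨0, hm⟩
      set x : MvPolynomial (Fin m) (ZMod n) := MvPolynomial.C a * MvPolynomial.X i with hx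
      have hxnil : IsNilpotent x := by
        obtain ⟨k, hk⟩ := ha
        exact ⟨k, by rw [hx, mul_pow, ← map_pow, hk, map_zero, zero_mul]⟩
      have hu := hxnil.isUnit_one_add
      have h1 := h hu.unit
      rw [IsUnit.unit_spec] at h1
      have h2 : 2 * x + x * x = 0 := by linear_combination h1
      set φ := (MvPolynomial.aeval (R := ZMod n)
        (fun _ : Fin m => (Polynomial.X : Polynomial (ZMod n))))
      have h3 : (2 : Polynomial (ZMod n)) * (Polynomial.C a * Polynomial.X)
          + (Polynomial.C a * Polynomial.X) * (Polynomial.C a * Polynomial.X) = 0 := by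
        have := congrArg φ h2
        simpa [hx, φ, MvPolynomial.aeval_C, Polynomial.algebraMap_eq] using this
      constructor
      · have := congrArg (fun q => Polynomial.coeff q 1) h3
        simpa [Polynomial.coeff_add, Polynomial.coeff_C_mul, mul_assoc] using this
      · have := congrArg (fun q => Polynomial.coeff q 2) h3
        simpa [Polynomial.coeff_add, Polynomial.coeff_C_mul, mul_assoc] using this
    exact nt_step n hn hU hNil
  · intro hdvd u
    exact (goodRing_mvPolynomial (goodRing_zmod hn hdvd) m).1 _ u.isUnit
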